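/- Let A be a finite automaton with transition set δ such that Run(A) is a bounded language. Let π₁, π₂ ∈ δ⁺ be nonempty cycles of A based at a common state, and let X, Y ⊆ δ* be languages such that X π₁* π₂* Y ⊆ Run(A). Then there exists a nonempty cycle π of A at that same state such that X π₁* π₂* Y ⊆ X π* Y ⊆ Run(A). -/

import Mathlib

open scoped Classical

noncomputable section

/-! ### Basic word and language notions -/

/-- Number of occurrences of `b` in the list `l`. -/
def countOcc {β : Type} (l : List β) (b : β) : ℕ :=
  (l.filter fun s => decide (s = b)).length

/-- `wpow w k` is the word `w` concatenated with itself `k` times. -/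
def wpow {β : Type} (w : List β) : ℕ → List β
  | 0 => []
  | k + 1 => w ++ wpow w k

/-- The word `w₁^{k₁} ⋯ wₙ^{kₙ}`. -/
def socProd {β : Type} {n : ℕ} (w : Fin n → List β) (k : Fin n → ℕ) : List β :=
  (List.ofFn fun i => wpow (w i) (k i)).flatten

/-- `w₁, …, wₙ` is a socle of `L`: the `wᵢ` are nonempty and `L ⊆ w₁* ⋯ wₙ*`. -/
def IsSocle {β : Type} {n : ℕ} (L : Set (List β)) (w : Fin n → List β) : Prop :=
  (∀ i, w i ≠ []) ∧ ∀ x ∈ L, ∃ k : Fin n → ℕ, x = socProd w k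

/-- A language is bounded if it has a socle. -/
def BoundedLang {β : Type} (L : Set (List β)) : Prop :=
  ∃ (n : ℕ) (w : Fin n → List β), 0 < n ∧ IsSocle L w

/-- The iteration set of `L` w.r.t. the socle `w`. -/
def IterSet {β : Type} {n : ℕ} (L : Set (List β)) (w : Fin n → List β) :
    Set (Fin n → ℕ) :=
  {k | socProd w k ∈ L}

/-- Concatenation of two languages. -/
def catLang {β : Type} (X Y : Set (List β)) : Set (List β) :=
  {w | ∃ x ∈ X, ∃ y ∈ Y, w = x ++ y}

/-- The language `z* = {z^k | k ∈ ℕ}` of powers of a single word. -/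
def starWord {β : Type} (z : List β) : Set (List β) :=
  {w | ∃ k : ℕ, w = wpow z k}

/-- Kleene star of a language. -/
def starLang {β : Type} (K : Set (List β)) : Set (List β) :=
  {w | ∃ l : List (List β), (∀ u ∈ l, u ∈ K) ∧ w = l.flatten}

/-! ### Semilinear sets -/

/-- `C ⊆ ℕ^ι` is linear: `C = c + P*` for a finite `P`. -/
def StmtIsLinearSet {ι : Type} (C : Set (ι → ℕ)) : Prop :=
  ∃ (c : ι → ℕ) (P : Set (ι → ℕ)), P.Finite ∧
    C = {x | ∃ p ∈ AddSubmonoid.closure P, x = c + p}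

/-- `C ⊆ ℕ^ι` is semilinear: a finite union of linear sets. -/
def StmtIsSemilinearSet {ι : Type} (C : Set (ι → ℕ)) : Prop :=
  ∃ S : Set (Set (ι → ℕ)), S.Finite ∧ (∀ D ∈ S, StmtIsLinearSet D) ∧ C = ⋃₀ S

/-- `L` is a bounded semilinear language: it has a socle whose iteration set is
semilinear. -/
def InBSL {β : Type} (L : Set (List β)) : Prop :=
  ∃ (n : ℕ) (w : Fin n → List β), 0 < n ∧ IsSocle L w ∧ StmtIsSemilinearSet (IterSet L w)

/-! ### Finite automata, paths, runs -/

/-- A (nondeterministic) finite automaton with a single initial state, a set of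
final states and a finite set of transitions. -/
structure FinAut (α : Type) where
  σ : Type
  [finσ : Fintype σ]
  init : σ
  accept : Set σ
  δ : Set (σ × α × σ)
  finδ : δ.Finite

namespace FinAut

variable {α : Type}

/-- The type of transitions of `A`. -/
def Trans (A : FinAut α) : Type := {t : A.σ × α × A.σ // t ∈ A.δ}

def src {A : FinAut α} (t : A.Trans) : A.σ := t.1.1
def lbl {A : FinAut α} (t : A.Trans) : α := t.1.2.1
def tgt {A : FinAut α} (t : A.Trans) : A.σ := t.1.2.2

/-- `A.Steps q π r` holds when `π` is a path from state `q` to state `r`. -/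
inductive Steps (A : FinAut α) : A.σ → List A.Trans → A.σ → Prop
  | nil (q : A.σ) : Steps A q [] q
  | cons {q r : A.σ} {t : A.Trans} {π : List A.Trans} :
      src t = q → Steps A (tgt t) π r → Steps A q (t :: π) r

/-- The set of accepting paths of `A`, as a language over the transition set. -/
def Run (A : FinAut α) : Set (List A.Trans) :=
  {π | ∃ f ∈ A.accept, A.Steps A.init π f}

/-- The language of `A`: labels of accepting paths. -/
def lang (A : FinAut α) : Set (List α) :=
  {w | ∃ π ∈ A.Run, w = π.map lbl}

/-- `A` is deterministic. -/
def Deterministic (A : FinAut α) : Prop :=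
  ∀ ⦃p : A.σ⦄ ⦃a : α⦄ ⦃q q' : A.σ⦄, (p, a, q) ∈ A.δ → (p, a, q') ∈ A.δ → q = q'

/-- The Parikh image of a path: how many times each transition occurs. -/
def pathCount {A : FinAut α} (π : List A.Trans) : A.Trans → ℕ :=
  fun t => countOcc π t

/-- `A` is flat: it consists of a spine of states `q 0, …, q n` (`q 0` initial,
`q n` final, exactly one transition from `q i` to `q (i+1)` given by the label
`sl i`), together with, for at most one pair `lo k ≤ hi k` each, a back-path of
fresh states from `q (hi k)` to `q (lo k)`; the endpoints of distinct
back-paths are not strictly inside one another (no nested loops). -/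
def Flat (A : FinAut α) : Prop :=
  ∃ (n : ℕ) (q : Fin (n + 1) → A.σ) (sl : Fin n → α) (m : ℕ)
    (lo hi : Fin m → Fin (n + 1)) (fresh : Fin m → List A.σ) (bl : Fin m → List α),
    Function.Injective q ∧
    A.init = q 0 ∧
    A.accept = {q (Fin.last n)} ∧
    (∀ k, lo k ≤ hi k) ∧
    (∀ k k', k ≠ k' → (lo k, hi k) ≠ (lo k', hi k')) ∧
    (∀ k k', k ≠ k' →
      ¬(lo k < lo k' ∧ lo k' < hi k) ∧ ¬(lo k < hi k' ∧ hi k' < hi k)) ∧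
    (∀ k, (fresh k).Nodup) ∧
    (∀ k i, q i ∉ fresh k) ∧
    (∀ k k', k ≠ k' → ∀ s ∈ fresh k, s ∉ fresh k') ∧
    (∀ s : A.σ, (∃ i, s = q i) ∨ ∃ k, s ∈ fresh k) ∧
    (∀ k, (bl k).length = (fresh k).length + 1) ∧
    A.δ = {t | (∃ i : Fin n, t = (q i.castSucc, sl i, q i.succ)) ∨
        (∃ (k : Fin m) (j : ℕ) (s s' : A.σ) (a : α),
          (q (hi k) :: (fresh k ++ [q (lo k)]))[j]? = some s ∧
          (bl k)[j]? = some a ∧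
          (q (hi k) :: (fresh k ++ [q (lo k)]))[j + 1]? = some s' ∧
          t = (s, a, s'))}

end FinAut

/-! ### ε-automata -/

/-- The language of an ε-automaton (transitions labelled by `Option α`, where
`none` stands for ε): labels of accepting paths, erasing ε. -/
def epsLang {α : Type} (A : FinAut (Option α)) : Set (List α) :=
  {w | ∃ π ∈ A.Run, w = π.filterMap FinAut.lbl}

/-! ### Constrained automata -/

/-- The language of the constrained automaton `(A, C)`. -/
def CALang {α : Type} (A : FinAut α) (C : Set (A.Trans → ℕ)) : Set (List α) :=
  {w | ∃ π ∈ A.Run, FinAut.pathCount π ∈ C ∧ w = π.map FinAut.lbl}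

/-- The language of the ε-constrained automaton `(A, C)`. -/
def EpsCALang {α : Type} (A : FinAut (Option α)) (C : Set (A.Trans → ℕ)) :
    Set (List α) :=
  {w | ∃ π ∈ A.Run, FinAut.pathCount π ∈ C ∧ w = π.filterMap FinAut.lbl}

def RecByCA {α : Type} (L : Set (List α)) : Prop :=
  ∃ (A : FinAut α) (C : Set (A.Trans → ℕ)), StmtIsSemilinearSet C ∧ CALang A C = L

def RecByDetCA {α : Type} (L : Set (List α)) : Prop :=
  ∃ (A : FinAut α) (C : Set (A.Trans → ℕ)),
    A.Deterministic ∧ StmtIsSemilinearSet C ∧ CALang A C = L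

def RecByEpsCA {α : Type} (L : Set (List α)) : Prop :=
  ∃ (A : FinAut (Option α)) (C : Set (A.Trans → ℕ)),
    StmtIsSemilinearSet C ∧ EpsCALang A C = L

/-- `L` is a finite union of languages of flat deterministic constrained
automata. -/
def FlatDetCAUnion {α : Type} (L : Set (List α)) : Prop :=
  ∃ (m : ℕ) (A : Fin m → FinAut α) (C : ∀ b, Set ((A b).Trans → ℕ)),
    (∀ b, (A b).Flat) ∧ (∀ b, (A b).Deterministic) ∧
    (∀ b, StmtIsSemilinearSet (C b)) ∧ L = ⋃ b, CALang (A b) (C b)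

/-! ### Parikh automata -/

/-- Projection of a word over `Σ × ℕ^d` on `Σ`. -/
def PsiW {α : Type} {d : ℕ} (ω : List (α × (Fin d → ℕ))) : List α :=
  ω.map Prod.fst

/-- Extended Parikh image: the sum of the vector components. -/
def PhiTilde {α : Type} {d : ℕ} (ω : List (α × (Fin d → ℕ))) : Fin d → ℕ :=
  (ω.map Prod.snd).sum

/-- The language of the Parikh automaton `(A, C)`.  (Note that the set `D` of
vectors appearing on transitions of `A` is automatically finite, since the
transition set of `A` is finite.) -/
def PALang {α : Type} {d : ℕ} (A : FinAut (α × (Fin d → ℕ))) (C : Set (Fin d → ℕ)) :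
    Set (List α) :=
  {w | ∃ ω ∈ A.lang, PhiTilde ω ∈ C ∧ w = PsiW ω}

/-- Determinism for Parikh automata: at most one pair `(v, q')` for each state
`q` and letter `a`. -/
def PADet {α : Type} {d : ℕ} (A : FinAut (α × (Fin d → ℕ))) : Prop :=
  ∀ ⦃p : A.σ⦄ ⦃a : α⦄ ⦃v v' : Fin d → ℕ⦄ ⦃q q' : A.σ⦄,
    (p, (a, v), q) ∈ A.δ → (p, (a, v'), q') ∈ A.δ → v = v' ∧ q = q'

def RecByPA {α : Type} (L : Set (List α)) : Prop :=
  ∃ (d : ℕ) (A : FinAut (α × (Fin d → ℕ))) (C : Set (Fin d → ℕ)),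
    StmtIsSemilinearSet C ∧ PALang A C = L

def RecByDetPA {α : Type} (L : Set (List α)) : Prop :=
  ∃ (d : ℕ) (A : FinAut (α × (Fin d → ℕ))) (C : Set (Fin d → ℕ)),
    PADet A ∧ StmtIsSemilinearSet C ∧ PALang A C = L

/-! ### Affine Parikh automata -/

/-- Apply the affine functions `x ↦ M t * x + v t` of the transitions of a path,
in order (first transition first). -/
def pathApply {α : Type} {d : ℕ} (A : FinAut α) (M : A.Trans → Matrix (Fin d) (Fin d) ℕ)
    (v : A.Trans → Fin d → ℕ) : List A.Trans → (Fin d → ℕ) → (Fin d → ℕ)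
  | [], x => x
  | t :: π, x => pathApply A M v π ((M t).mulVec x + v t)

/-- The language of the affine Parikh automaton `(A, U, C)`, where the affine
function attached to transition `t` is `x ↦ M t * x + v t`. -/
def APALang {α : Type} {d : ℕ} (A : FinAut α) (M : A.Trans → Matrix (Fin d) (Fin d) ℕ)
    (v : A.Trans → Fin d → ℕ) (C : Set (Fin d → ℕ)) : Set (List α) :=
  {w | ∃ π ∈ A.Run, pathApply A M v π 0 ∈ C ∧ w = π.map FinAut.lbl}

/-- The monoid of the APA: the multiplicative matrix monoid generated by the
matrices of the transitions. -/
def APAMonoid {α : Type} {d : ℕ} (A : FinAut α) (M : A.Trans → Matrix (Fin d) (Fin d) ℕ) :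
    Set (Matrix (Fin d) (Fin d) ℕ) :=
  (Submonoid.closure (Set.range M) : Submonoid (Matrix (Fin d) (Fin d) ℕ))

/-! ### Semilinear regular expressions -/

/-- The language `y₀ x₁* y₁ ⋯ xₙ* yₙ` of a branch of an SLRE. -/
def branchLang {β : Type} {n : ℕ} (y : Fin (n + 1) → List β) (x : Fin n → List β) :
    Set (List β) :=
  {w | ∃ k : Fin n → ℕ,
    w = y 0 ++ (List.ofFn fun i : Fin n => wpow (x i) (k i) ++ y i.succ).flatten}

end
/-! ### Auxiliary lemmas for `cycles_merge` -/

section CMAux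

variable {β : Type}

lemma wpow_add (w : List β) (a b : ℕ) : wpow w a ++ wpow w b = wpow w (a + b) := by
  induction a with
  | zero => simp [wpow]
  | succ a ih => simp [wpow, Nat.succ_add, List.append_assoc, ih]

lemma wpow_one (w : List β) : wpow w 1 = w := by simp [wpow]

lemma wpow_mul (w : List β) (a b : ℕ) : wpow (wpow w a) b = wpow w (a * b) := by
  induction b with
  | zero => simp [wpow]
  | succ b ih => rw [wpow, ih, wpow_add, Nat.mul_succ, Nat.add_comm]

lemma length_wpow (w : List β) (k : ℕ) : (wpow w k).length = k * w.length := by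
  induction k with
  | zero => simp [wpow]
  | succ k ih => simp [wpow, ih, Nat.succ_mul]; ring

lemma wpow_ne_nil {w ρ : List β} {k : ℕ} (h : w = wpow ρ k) (hw : w ≠ []) :
    ρ ≠ [] ∧ k ≠ 0 := by
  have h0 : 0 < w.length := List.length_pos_iff.2 hw
  rw [h, length_wpow] at h0
  exact ⟨fun hr => by simp [hr] at h0, fun hk => by simp [hk] at h0⟩

/-- Common-root lemma: commuting words are powers of a common word. -/
lemma comm_root : ∀ (N : ℕ) (u v : List β), u.length + v.length ≤ N →
    u ++ v = v ++ u → ∃ ρ k l, u = wpow ρ k ∧ v = wpow ρ l := by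
  intro N
  induction N with
  | zero =>
    intro u v hlen _
    have hu : u = [] := by
      cases u with
      | nil => rfl
      | cons a t => simp at hlen
    have hv : v = [] := by
      cases v with
      | nil => rfl
      | cons a t => simp only [List.length_cons] at hlen; omega
    exact ⟨[], 0, 0, by simp [hu, hv, wpow]⟩
  | succ N ih =>
    have key : ∀ u v : List β, u.length + v.length ≤ N + 1 → u ++ v = v ++ u →
        u.length ≤ v.length → ∃ ρ k l, u = wpow ρ k ∧ v = wpow ρ l := by
      intro u v hlen hcomm hle
      rcases eq_or_ne u [] with rfl | hu
      · exact ⟨v, 0, 1, by simp [wpow]⟩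
      · -- u is a prefix of v
        have hup : u = v.take u.length := by
          have h1 : u = (u ++ v).take u.length := by simp
          rw [hcomm] at h1
          conv_lhs => rw [h1]
          rw [List.take_append_of_le_length hle]
        set v' := v.drop u.length with hv'
        have hv : v = u ++ v' := by
          conv_lhs => rw [← List.take_append_drop u.length v]
          rw [← hup]
        have hcomm' : u ++ v' = v' ++ u := by
          have : u ++ (u ++ v') = (u ++ v') ++ u := by rw [← hv]; exact hcomm
          rw [List.append_assoc] at this
          exact List.append_cancel_left this
        have hlen' : u.length + v'.length ≤ N := by
          have h0 : 0 < u.length := List.length_pos_iff.2 hu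
          have : v.length = u.length + v'.length := by
            rw [hv, List.length_append]
          omega
        obtain ⟨ρ, k, l, hku, hkv⟩ := ih u v' hlen' hcomm'
        exact ⟨ρ, k, k + l, hku, by rw [hv, hku, hkv, wpow_add]⟩
    intro u v hlen hcomm
    rcases le_total u.length v.length with h | h
    · exact key u v hlen hcomm h
    · obtain ⟨ρ, k, l, h1, h2⟩ := key v u (by omega) hcomm.symm h
      exact ⟨ρ, l, k, h2, h1⟩

/-- Flattenings of lists of equal-length blocks are equal only if the lists are. -/
lemma flatten_blocks_inj (ℓ : ℕ) :
    ∀ (L₁ L₂ : List (List β)), (∀ w ∈ L₁, w.length = ℓ) → (∀ w ∈ L₂, w.length = ℓ) →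
      L₁.length = L₂.length → L₁.flatten = L₂.flatten → L₁ = L₂ := by
  intro L₁
  induction L₁ with
  | nil =>
    intro L₂ _ _ hlen _
    cases L₂ with
    | nil => rfl
    | cons b t => simp at hlen
  | cons a t ih =>
    intro L₂ h1 h2 hlen hf
    cases L₂ with
    | nil => simp at hlen
    | cons b t' =>
      simp only [List.flatten_cons] at hf
      have hab : a = b ∧ t.flatten = t'.flatten :=
        List.append_inj hf (by rw [h1 a (by simp), h2 b (by simp)])
      have := ih t' (fun w hw => h1 w (by simp [hw])) (fun w hw => h2 w (by simp [hw]))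
        (by simpa using hlen) hab.2
      rw [hab.1, this]

lemma exists_mul_pow_lt_two_pow (c n : ℕ) : ∃ m, c * (m + 1) ^ n < 2 ^ m := by
  set s := c * (n + 1) ^ n with hs
  refine ⟨s * (n + 1), ?_⟩
  have h1 : s + 1 ≤ 2 ^ s := Nat.lt_two_pow_self (n := s)
  calc c * (s * (n + 1) + 1) ^ n ≤ c * ((n + 1) * (s + 1)) ^ n := by
        apply Nat.mul_le_mul_left; apply Nat.pow_le_pow_left; ring_nf; omega
    _ = s * (s + 1) ^ n := by rw [hs, mul_pow]; ring
    _ < (s + 1) * (s + 1) ^ n := by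
        have hp : 0 < (s + 1) ^ n := pow_pos (Nat.succ_pos s) n
        nlinarith
    _ = (s + 1) ^ (n + 1) := by ring
    _ ≤ (2 ^ s) ^ (n + 1) := Nat.pow_le_pow_left h1 _
    _ = 2 ^ (s * (n + 1)) := by rw [← pow_mul]

lemma exists_affine_pow_lt_two_pow (a b n : ℕ) : ∃ m, (a + b * m) ^ n < 2 ^ m := by
  obtain ⟨m, hm⟩ := exists_mul_pow_lt_two_pow ((a + b) ^ n) n
  refine ⟨m, lt_of_le_of_lt ?_ hm⟩
  calc (a + b * m) ^ n ≤ ((a + b) * (m + 1)) ^ n := by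
        apply Nat.pow_le_pow_left; nlinarith
    _ = (a + b) ^ n * (m + 1) ^ n := mul_pow _ _ _

end CMAux

section StepsAux

variable {α : Type} {A : FinAut α}

lemma steps_append {p r s : A.σ} {a b : List A.Trans}
    (ha : A.Steps p a r) (hb : A.Steps r b s) : A.Steps p (a ++ b) s := by
  induction ha with
  | nil => exact hb
  | cons h _ ih => exact FinAut.Steps.cons h (ih hb)

lemma steps_split {p s : A.σ} : ∀ {a b : List A.Trans}, A.Steps p (a ++ b) s →
    ∃ r, A.Steps p a r ∧ A.Steps r b s := by
  intro a
  induction a generalizing p with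
  | nil => exact fun h => ⟨p, FinAut.Steps.nil p, h⟩
  | cons t ts ih =>
    intro b h
    cases h with
    | cons hsrc htl =>
      obtain ⟨r, hh1, hh2⟩ := ih htl
      exact ⟨r, FinAut.Steps.cons hsrc hh1, hh2⟩

lemma steps_nil_eq {p r : A.σ} (h : A.Steps p [] r) : p = r := by cases h; rfl

lemma steps_src {p r : A.σ} {t : A.Trans} {l : List A.Trans} (h : A.Steps p (t :: l) r) :
    p = FinAut.src t := by
  cases h with
  | cons hs _ => exact hs.symm

lemma steps_start_eq {p p' r r' : A.σ} {l : List A.Trans} (hl : l ≠ [])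
    (h : A.Steps p l r) (h' : A.Steps p' l r') : p = p' := by
  cases l with
  | nil => exact absurd rfl hl
  | cons t ts => rw [steps_src h, steps_src h']

lemma steps_tgt_getLast : ∀ {l : List A.Trans} {p r : A.σ}, A.Steps p l r →
    ∀ (hl : l ≠ []), r = FinAut.tgt (l.getLast hl) := by
  intro l
  induction l with
  | nil => intro p r _ hl; exact absurd rfl hl
  | cons t ts ih =>
    intro p r h hl
    cases h with
    | cons hs htl =>
      cases ts with
      | nil => simpa using (steps_nil_eq htl).symm
      | cons u us =>
        rw [List.getLast_cons (by simp)]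
        exact ih htl (by simp)

lemma steps_end_eq {p p' r r' : A.σ} {l : List A.Trans} (hl : l ≠ [])
    (h : A.Steps p l r) (h' : A.Steps p' l r') : r = r' := by
  rw [steps_tgt_getLast h hl, steps_tgt_getLast h' hl]

lemma steps_wpow {q : A.σ} {w : List A.Trans} (h : A.Steps q w q) (k : ℕ) :
    A.Steps q (wpow w k) q := by
  induction k with
  | zero => exact FinAut.Steps.nil q
  | succ k ih => exact steps_append h ih

lemma steps_flatten {q : A.σ} : ∀ {L : List (List A.Trans)},
    (∀ w ∈ L, A.Steps q w q) → A.Steps q L.flatten q := by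
  intro L
  induction L with
  | nil => exact fun _ => FinAut.Steps.nil q
  | cons a t ih =>
    intro h
    rw [List.flatten_cons]
    exact steps_append (h a (by simp)) (ih fun w hw => h w (by simp [hw]))

lemma steps_root {q : A.σ} {ρ : List A.Trans} {k : ℕ} (hρ : ρ ≠ []) (hk : k ≠ 0)
    (h : A.Steps q (wpow ρ k) q) : A.Steps q ρ q := by
  obtain ⟨k, rfl⟩ : ∃ k', k = k' + 1 := ⟨k - 1, by omega⟩
  rw [wpow] at h
  obtain ⟨r, h1, h2⟩ := steps_split h
  cases k with
  | zero =>
    cases steps_nil_eq h2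
    exact h1
  | succ k =>
    rw [wpow] at h2
    cases ρ with
    | nil => exact absurd rfl hρ
    | cons t ts =>
      have e1 : q = FinAut.src t := steps_src h1
      have e2 : r = FinAut.src t := steps_src (by simpa using h2)
      have : r = q := e2.trans e1.symm
      exact this ▸ h1

end StepsAux


/-- If `Run(A)` is bounded, `π₁, π₂` are nonempty cycles at a
common state `q`, and `X π₁* π₂* Y ⊆ Run(A)`, then there is a nonempty cycle
`π` at `q` with `X π₁* π₂* Y ⊆ X π* Y ⊆ Run(A)`. -/
theorem cycles_merge {α : Type} [Fintype α] (A : FinAut α)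
    (hbd : BoundedLang A.Run) (q : A.σ) (π₁ π₂ : List A.Trans)
    (h₁ : π₁ ≠ [] ∧ A.Steps q π₁ q) (h₂ : π₂ ≠ [] ∧ A.Steps q π₂ q)
    (X Y : Set (List A.Trans))
    (hsub : catLang X (catLang (starWord π₁) (catLang (starWord π₂) Y)) ⊆ A.Run) :
    ∃ π : List A.Trans, π ≠ [] ∧ A.Steps q π q ∧
      catLang X (catLang (starWord π₁) (catLang (starWord π₂) Y)) ⊆
        catLang X (catLang (starWord π) Y) ∧
      catLang X (catLang (starWord π) Y) ⊆ A.Run := by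
  classical
  by_cases hXY : X.Nonempty ∧ Y.Nonempty
  · obtain ⟨⟨x₀, hx₀⟩, ⟨y₀, hy₀⟩⟩ := hXY
    -- every `x ∈ X` reaches `q` from the initial state, every `y ∈ Y` reaches
    -- an accepting state from `q`
    have hxq : ∀ x ∈ X, ∀ y ∈ Y,
        A.Steps A.init x q ∧ ∃ f ∈ A.accept, A.Steps q y f := by
      intro x hx y hy
      have hr1 : x ++ (π₁ ++ ([] ++ y)) ∈ A.Run :=
        hsub ⟨x, hx, π₁ ++ ([] ++ y),
          ⟨π₁, ⟨1, (wpow_one π₁).symm⟩, [] ++ y, ⟨[], ⟨0, rfl⟩, y, hy, rfl⟩, rfl⟩, rfl⟩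
      have hr0 : x ++ ([] ++ ([] ++ y)) ∈ A.Run :=
        hsub ⟨x, hx, [] ++ ([] ++ y),
          ⟨[], ⟨0, rfl⟩, [] ++ y, ⟨[], ⟨0, rfl⟩, y, hy, rfl⟩, rfl⟩, rfl⟩
      obtain ⟨f1, hf1, hs1⟩ := hr1
      obtain ⟨r, hrx, hrr⟩ := steps_split hs1
      obtain ⟨r2, hr2, _⟩ := steps_split hrr
      have hrq : r = q := steps_start_eq h₁.1 hr2 h₁.2
      obtain ⟨f0, hf0, hs0⟩ := hr0
      rw [List.nil_append] at hs0
      obtain ⟨r', hr'x, hr'y⟩ := steps_split hs0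
      have hr'q : r' = q := by
        rcases eq_or_ne x [] with rfl | hxne
        · rw [← steps_nil_eq hr'x, steps_nil_eq hrx, hrq]
        · rw [steps_end_eq hxne hr'x hrx, hrq]
      exact ⟨hrq ▸ hrx, f0, hf0, hr'q ▸ hr'y⟩
    -- the two cycles commute
    have hcomm : π₁ ++ π₂ = π₂ ++ π₁ := by
      by_contra hne
      obtain ⟨n, w, hn, hwne, hsoc⟩ := hbd
      set ℓ := π₁.length + π₂.length with hℓ
      set g : Bool → List A.Trans := fun b => if b then π₁ ++ π₂ else π₂ ++ π₁ with hg
      obtain ⟨m, hm⟩ := exists_affine_pow_lt_two_pow (x₀.length + y₀.length + 1) ℓ n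
      set N := x₀.length + y₀.length + m * ℓ with hN
      set wordOf : (Fin m → Bool) → List A.Trans :=
        fun s => x₀ ++ ((List.ofFn fun i => g (s i)).flatten ++ y₀) with hword
      obtain ⟨hsx, f, hf, hsy⟩ := hxq x₀ hx₀ y₀ hy₀
      have hgcyc : ∀ b, A.Steps q (g b) q := by
        intro b
        cases b <;> simp only [hg, if_true, if_false] <;>
          [exact steps_append h₂.2 h₁.2; exact steps_append h₁.2 h₂.2]
      have hglen : ∀ b, (g b).length = ℓ := by
        intro b; cases b <;> simp [hg, hℓ] <;> omega
      have hrun : ∀ s, wordOf s ∈ A.Run := by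
        intro s
        refine ⟨f, hf, steps_append hsx (steps_append ?_ hsy)⟩
        refine steps_flatten ?_
        intro w hw
        obtain ⟨i, rfl⟩ := List.mem_ofFn.1 hw
        exact hgcyc _
      have hwlen : ∀ s, (wordOf s).length = N := by
        intro s
        simp only [hword, List.length_append, List.length_flatten, List.map_ofFn]
        have : ((List.ofFn ((fun l : List A.Trans => l.length) ∘ fun i => g (s i))).sum) = m * ℓ := by
          rw [List.sum_ofFn]
          simp only [Function.comp_apply, hglen]
          simp [Finset.sum_const, mul_comm]
        rw [this, hN]
        ring
      -- pick socle exponents for each word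
      have hks : ∀ s, ∃ k : Fin n → ℕ, wordOf s = socProd w k := fun s => hsoc _ (hrun s)
      set ks : (Fin m → Bool) → (Fin n → ℕ) := fun s => Classical.choose (hks s) with hksdef
      have hksp : ∀ s, wordOf s = socProd w (ks s) := fun s => Classical.choose_spec (hks s)
      have hsoclen : ∀ k : Fin n → ℕ, (socProd w k).length = ∑ i, k i * (w i).length := by
        intro k
        simp [socProd, List.length_flatten, List.map_ofFn, List.sum_ofFn,
          Function.comp, length_wpow]
      have hbound : ∀ s i, ks s i < N + 1 := by
        intro s i
        have h1 : ∑ j, ks s j * (w j).length = N := by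
          rw [← hsoclen, ← hksp, hwlen]
        have h2 : ks s i * (w i).length ≤ N := h1 ▸ Finset.single_le_sum
          (f := fun j => ks s j * (w j).length) (fun _ _ => Nat.zero_le _) (Finset.mem_univ i)
        have h3 : 1 ≤ (w i).length := List.length_pos_iff.2 (hwne i)
        calc ks s i = ks s i * 1 := (mul_one _).symm
          _ ≤ ks s i * (w i).length := Nat.mul_le_mul_left _ h3
          _ ≤ N := h2
          _ < N + 1 := Nat.lt_succ_self N
      have ginj : Function.Injective g := by
        intro b b' hbb
        cases b <;> cases b' <;> simp only [hg, if_true, if_false] at hbb <;>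
          first | rfl | exact absurd hbb.symm hne | exact absurd hbb hne
      have hinj : Function.Injective (fun s i => (⟨ks s i, hbound s i⟩ : Fin (N + 1))) := by
        intro s s' hss
        have hkk : ks s = ks s' := by
          funext i
          exact congrArg Fin.val (congrFun hss i)
        have hww : wordOf s = wordOf s' := by rw [hksp s, hksp s', hkk]
        simp only [hword] at hww
        have h1 := List.append_cancel_left hww
        have h2 := List.append_cancel_right h1
        have h3 := flatten_blocks_inj ℓ _ _
          (by intro w hw; obtain ⟨i, rfl⟩ := List.mem_ofFn.1 hw; exact hglen _)
          (by intro w hw; obtain ⟨i, rfl⟩ := List.mem_ofFn.1 hw; exact hglen _)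
          (by simp) h2
        have h4 : (fun i => g (s i)) = fun i => g (s' i) := List.ofFn_inj.1 h3
        funext i
        exact ginj (congrFun h4 i)
      have hcard := Fintype.card_le_of_injective _ hinj
      simp only [Fintype.card_fun, Fintype.card_fin, Fintype.card_bool] at hcard
      have : (N + 1) ^ n < 2 ^ m := by
        have : x₀.length + y₀.length + 1 + ℓ * m = N + 1 := by rw [hN]; ring
        rw [← this]
        exact hm
      omega
    -- extract the common root
    obtain ⟨ρ, a, b, hρ1, hρ2⟩ :=
      comm_root (π₁.length + π₂.length) π₁ π₂ le_rfl hcomm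
    obtain ⟨hρne, hane⟩ := wpow_ne_nil hρ1 h₁.1
    obtain ⟨_, hbne⟩ := wpow_ne_nil hρ2 h₂.1
    have hρq : A.Steps q ρ q := steps_root hρne hane (hρ1 ▸ h₁.2)
    have hkey : ∀ (c d : ℕ) (y : List A.Trans),
        wpow ρ c ++ (wpow ρ d ++ y) = wpow ρ (c + d) ++ y := by
      intro c d y
      rw [← List.append_assoc, wpow_add]
    refine ⟨ρ, hρne, hρq, ?_, ?_⟩
    · rintro w ⟨x, hx, _, ⟨_, ⟨i, rfl⟩, _, ⟨_, ⟨j, rfl⟩, y, hy, rfl⟩, rfl⟩, rfl⟩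
      refine ⟨x, hx, wpow ρ (a * i + b * j) ++ y,
        ⟨wpow ρ (a * i + b * j), ⟨a * i + b * j, rfl⟩, y, hy, rfl⟩, ?_⟩
      rw [hρ1, hρ2, wpow_mul, wpow_mul, hkey]
    · rintro w ⟨x, hx, _, ⟨_, ⟨c, rfl⟩, y, hy, rfl⟩, rfl⟩
      obtain ⟨hsx, f, hf, hsy⟩ := hxq x hx y hy
      exact ⟨f, hf, steps_append hsx (steps_append (steps_wpow hρq c) hsy)⟩
  · -- `X` or `Y` empty: everything is empty
    have hempty : ∀ w, w ∈ catLang X (catLang (starWord π₁) (catLang (starWord π₂) Y)) → False := by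
      rintro w ⟨x, hx, _, ⟨_, _, _, ⟨_, _, y, hy, rfl⟩, rfl⟩, rfl⟩
      exact hXY ⟨⟨x, hx⟩, ⟨y, hy⟩⟩
    refine ⟨π₁, h₁.1, h₁.2, fun w hw => absurd hw (hempty w), ?_⟩
    rintro w ⟨x, hx, _, ⟨_, _, y, hy, rfl⟩, rfl⟩
    exact absurd ⟨⟨x, hx⟩, ⟨y, hy⟩⟩ hXY
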